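/- For 0 < c < π/8, ∫_0^∞ sinh(cz)⁴ / cosh(πz/2) dz = (1/8)·(1/cos(4c) − 4/cos(2c) + 3). -/

import Mathlib

open Real MeasureTheory Set

-- step 1: real beta-type integral
lemma beta_real {u : ℝ} (hu : 0 < u) (hu' : u < 1) :
    ∫ x in Ioo (0:ℝ) 1, x ^ (u - 1) * (1 - x) ^ (-u) = π / Real.sin (π * u) := by
  have h1 : Complex.Gamma u * Complex.Gamma (1 - u)
      = Complex.Gamma (u + (1 - u)) * Complex.betaIntegral u (1 - u) := by
    apply Complex.Gamma_mul_Gamma_eq_betaIntegral <;> simp [hu, hu']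
  have h2 : Complex.Gamma u * Complex.Gamma (1 - u) = π / Complex.sin (π * u) := by
    have := Complex.Gamma_mul_Gamma_one_sub (u : ℂ)
    simpa using this
  have h3 : Complex.betaIntegral u (1 - u) = π / Complex.sin (π * u) := by
    rw [← h2, h1]
    norm_num [Complex.Gamma_one]
  have h4 : Complex.betaIntegral u (1 - u)
      = ((∫ x in Ioc (0:ℝ) 1, x ^ (u - 1) * (1 - x) ^ (-u) : ℝ) : ℂ) := by
    rw [Complex.betaIntegral, intervalIntegral.integral_of_le zero_le_one]
    have h4' : (∫ x in Ioc (0:ℝ) 1, (x : ℂ) ^ ((u:ℂ) - 1) * (1 - (x:ℂ)) ^ ((1:ℂ) - (u:ℂ) - 1))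
        = ∫ x in Ioc (0:ℝ) 1, ((x ^ (u - 1) * (1 - x) ^ (-u) : ℝ) : ℂ) := by
      refine setIntegral_congr_fun measurableSet_Ioc fun x hx => ?_
      have hx0 : (0:ℝ) < x := hx.1
      have h1x : (0:ℝ) ≤ 1 - x := by linarith [hx.2]
      simp only [Complex.ofReal_mul]
      rw [Complex.ofReal_cpow hx0.le, Complex.ofReal_cpow h1x]
      push_cast
      ring_nf
    exact h4'.trans integral_ofReal
  rw [h4] at h3
  rw [← MeasureTheory.integral_Ioc_eq_integral_Ioo]
  have h5 : ((π / Real.sin (π * u) : ℝ) : ℂ) = (π : ℂ) / Complex.sin (π * u) := by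
    push_cast [Complex.ofReal_sin]
    norm_num
  rw [← h5] at h3
  exact_mod_cast h3

lemma exp_div_cosh_integral {b : ℝ} (hb : |b| < π/2) :
    ∫ z : ℝ, Real.exp (b*z) / (2 * Real.cosh (π*z/2)) = 1 / Real.cos b := by
  have hπ : (0:ℝ) < π := Real.pi_pos
  obtain ⟨hb1, hb2⟩ := abs_lt.mp hb
  set u : ℝ := 1/2 + b/π with hu_def
  have hu0 : 0 < u := by
    have : -(1/2 : ℝ) < b/π := by rw [lt_div_iff₀ hπ]; linarith
    simp only [hu_def]; linarith
  have hu1 : u < 1 := by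
    have : b/π < 1/2 := by rw [div_lt_iff₀ hπ]; linarith
    simp only [hu_def]; linarith
  set f : ℝ → ℝ := fun z => (1 + Real.exp (-(π*z)))⁻¹ with hf_def
  have hfd : ∀ z : ℝ, HasDerivAt f
      (π * Real.exp (-(π*z)) / (1 + Real.exp (-(π*z)))^2) z := by
    intro z
    have h1 : HasDerivAt (fun z : ℝ => -(π*z)) (-π) z := by
      simpa [Pi.neg_def] using ((hasDerivAt_id z).const_mul π).neg
    have h2 : HasDerivAt (fun z : ℝ => 1 + Real.exp (-(π*z)))
        (Real.exp (-(π*z)) * -π) z := (h1.exp).const_add 1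
    have h3 := h2.inv (by positivity)
    refine HasDerivAt.congr_deriv h3 ?_
    field_simp
  have hmono : StrictMono f := by
    intro x y hxy
    have he : Real.exp (-(π*y)) < Real.exp (-(π*x)) := by
      apply Real.exp_lt_exp.mpr; nlinarith
    have h1 : (0:ℝ) < 1 + Real.exp (-(π*y)) := by positivity
    simp only [hf_def]
    rw [inv_lt_inv₀ (by positivity) h1]
    linarith
  have himg : f '' univ = Ioo 0 1 := by
    rw [image_univ]
    ext y
    simp only [mem_range, mem_Ioo, hf_def]
    constructor
    · rintro ⟨z, rfl⟩
      refine ⟨by positivity, ?_⟩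
      rw [inv_lt_one₀ (by positivity)]
      have := Real.exp_pos (-(π*z)); linarith
    · rintro ⟨hy0, hy1⟩
      refine ⟨-Real.log ((1-y)/y) / π, ?_⟩
      have h1y : (0:ℝ) < (1-y)/y := div_pos (by linarith) hy0
      have : -(π * (-Real.log ((1-y)/y) / π)) = Real.log ((1-y)/y) := by
        field_simp
      rw [this, Real.exp_log h1y]
      field_simp; ring
  have key := integral_image_eq_integral_abs_deriv_smul MeasurableSet.univ
    (fun x _ => (hfd x).hasDerivWithinAt) hmono.injective.injOn
    (fun x : ℝ => x ^ (u-1) * (1-x) ^ (-u))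
  rw [himg, beta_real hu0 hu1, setIntegral_univ] at key
  have hpt : ∀ z : ℝ, |π * Real.exp (-(π*z)) / (1 + Real.exp (-(π*z)))^2| •
      ((f z) ^ (u-1) * (1 - f z) ^ (-u))
      = π * (Real.exp (b*z) / (2 * Real.cosh (π*z/2))) := by
    intro z
    have hE0 : (0:ℝ) < Real.exp (-(π*z)) := Real.exp_pos _
    have h1E : (0:ℝ) < 1 + Real.exp (-(π*z)) := by linarith
    have h1 : 1 - f z = Real.exp (-(π*z)) * (1 + Real.exp (-(π*z)))⁻¹ := by
      simp only [hf_def]; field_simp; ring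
    have h2 : (f z) ^ (u-1) * (1 - f z) ^ (-u)
        = (1 + Real.exp (-(π*z))) * Real.exp (-(π*z)) ^ (-u) := by
      rw [h1]
      simp only [hf_def]
      rw [Real.inv_rpow h1E.le, Real.mul_rpow hE0.le (by positivity), Real.inv_rpow h1E.le,
        ← Real.rpow_neg h1E.le, ← Real.rpow_neg h1E.le]
      rw [show -(-u) = u by ring, mul_comm ((Real.exp (-(π*z))) ^ (-u)) _, ← mul_assoc,
        ← Real.rpow_add h1E, show -(u-1)+u = (1:ℝ) by ring, Real.rpow_one]
    rw [smul_eq_mul, abs_of_pos (by positivity), h2, Real.cosh_eq]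
    have e3 : Real.exp (-(π*z)) ^ (-u) = Real.exp (π*z*u) := by
      rw [← Real.exp_mul]; ring_nf
    have e4 : π*z*u = π*z/2 + b*z := by
      simp only [hu_def]; field_simp
    have e5 : Real.exp (-(π*z)) = (Real.exp (π*z/2))⁻¹ * (Real.exp (π*z/2))⁻¹ := by
      rw [← Real.exp_neg, ← Real.exp_add]; ring_nf
    have e6 : Real.exp (-(π*z/2)) = (Real.exp (π*z/2))⁻¹ := by rw [← Real.exp_neg]
    rw [e3, e4, Real.exp_add, e5, e6]
    have ht : (0:ℝ) < Real.exp (π*z/2) := Real.exp_pos _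
    have ht2 : (0:ℝ) < Real.exp (π*z/2) + (Real.exp (π*z/2))⁻¹ := by positivity
    field_simp
  simp_rw [hpt] at key
  rw [MeasureTheory.integral_const_mul] at key
  have hsin : Real.sin (π*u) = Real.cos b := by
    rw [show π*u = b + π/2 by simp only [hu_def]; field_simp; ring, Real.sin_add_pi_div_two]
  rw [hsin] at key
  have key2 : π * (1 / Real.cos b) = π * ∫ z : ℝ, Real.exp (b*z) / (2 * Real.cosh (π*z/2)) := by
    rw [← key]; ring
  exact (mul_left_cancel₀ hπ.ne' key2).symm

lemma int_Ioi {b : ℝ} (hb : b < π/2) :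
    IntegrableOn (fun z => Real.exp (b*z) / (2 * Real.cosh (π*z/2))) (Ioi (0:ℝ)) := by
  have hcont : Continuous fun z : ℝ => Real.exp (b*z) / (2 * Real.cosh (π*z/2)) :=
    Continuous.div (by continuity) (by continuity) fun z => by positivity
  refine (exp_neg_integrableOn_Ioi 0 (by linarith : (0:ℝ) < π/2 - b)).mono'
    hcont.aestronglyMeasurable.restrict ?_
  filter_upwards with z
  rw [Real.norm_eq_abs, abs_of_pos (by positivity)]
  have h1 : Real.exp (π*z/2) ≤ 2 * Real.cosh (π*z/2) := by
    rw [Real.cosh_eq]; have := Real.exp_pos (-(π*z/2)); linarith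
  calc Real.exp (b*z) / (2 * Real.cosh (π*z/2))
      ≤ Real.exp (b*z) / Real.exp (π*z/2) := by
        apply div_le_div_of_nonneg_left (Real.exp_pos _).le (Real.exp_pos _) h1
    _ = Real.exp (-(π/2 - b) * z) := by
        rw [← Real.exp_sub]; congr 1; ring

lemma int_Iio {b : ℝ} (hb : -(π/2) < b) :
    IntegrableOn (fun z => Real.exp (b*z) / (2 * Real.cosh (π*z/2))) (Iio (0:ℝ)) := by
  have h := int_Ioi (b := -b) (by linarith)
  have himg : (fun x : ℝ => -x) '' Iio 0 = Ioi 0 := by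
    simpa using Set.image_neg_Iio (a := (0:ℝ))
  have key := integrableOn_image_iff_integrableOn_abs_deriv_smul
      (s := Iio (0:ℝ)) (f := fun x : ℝ => -x) (f' := fun _ : ℝ => (-1:ℝ))
      measurableSet_Iio (fun x _ => (hasDerivAt_neg x).hasDerivWithinAt)
      (fun x _ y _ hxy => neg_injective hxy)
      (fun z => Real.exp (-b*z) / (2 * Real.cosh (π*z/2)))
  rw [himg] at key
  have h2 := key.mp h
  refine h2.congr_fun (fun z _ => ?_) measurableSet_Iio
  simp only [smul_eq_mul, abs_neg, abs_one, one_mul, neg_mul_neg]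
  rw [show π * (-z) / 2 = -(π*z/2) by ring, Real.cosh_neg]

lemma int_cosh_ratio {b : ℝ} (hb : |b| < π/2) :
    IntegrableOn (fun z => Real.cosh (b*z) / Real.cosh (π*z/2)) (Ioi (0:ℝ)) := by
  obtain ⟨hb1, hb2⟩ := abs_lt.mp hb
  have h1 := int_Ioi hb2
  have h2 := int_Ioi (b := -b) (by linarith)
  have hsum : IntegrableOn (fun z => Real.exp (b*z) / (2 * Real.cosh (π*z/2))
      + Real.exp (-b*z) / (2 * Real.cosh (π*z/2))) (Ioi (0:ℝ)) := h1.add h2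
  refine hsum.congr_fun (fun z _ => ?_) measurableSet_Ioi
  have hc : (0:ℝ) < Real.cosh (π*z/2) := Real.cosh_pos _
  beta_reduce
  rw [neg_mul, Real.cosh_eq, Real.cosh_eq, Real.exp_neg]
  field_simp

lemma cosh_ratio_integral {b : ℝ} (hb : |b| < π/2) :
    ∫ z in Ioi (0:ℝ), Real.cosh (b*z) / Real.cosh (π*z/2) = 1 / Real.cos b := by
  obtain ⟨hb1, hb2⟩ := abs_lt.mp hb
  have hIoi := int_Ioi hb2
  have hIic : IntegrableOn (fun z => Real.exp (b*z) / (2 * Real.cosh (π*z/2)))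
      (Iic (0:ℝ)) := (int_Iio hb1).congr_set_ae Iio_ae_eq_Iic.symm
  have hsplit := intervalIntegral.integral_Iic_add_Ioi (b := (0:ℝ)) hIic hIoi
  rw [exp_div_cosh_integral hb] at hsplit
  have hrefl : ∫ z in Ioi (0:ℝ), Real.exp (-b*z) / (2 * Real.cosh (π*z/2))
      = ∫ z in Iic (0:ℝ), Real.exp (b*z) / (2 * Real.cosh (π*z/2)) := by
    have hcn := integral_comp_neg_Ioi (0:ℝ)
      (fun z => Real.exp (b*z) / (2 * Real.cosh (π*z/2)))
    rw [neg_zero] at hcn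
    rw [← hcn]
    refine setIntegral_congr_fun measurableSet_Ioi (fun z _ => ?_)
    rw [show b*(-z) = -b*z by ring, show π*(-z)/2 = -(π*z/2) by ring, Real.cosh_neg]
  rw [← hrefl] at hsplit
  have hIoi' := int_Ioi (b := -b) (by linarith)
  rw [← integral_add hIoi' hIoi] at hsplit
  rw [← hsplit]
  refine setIntegral_congr_fun measurableSet_Ioi (fun z _ => ?_)
  have hc : (0:ℝ) < Real.cosh (π*z/2) := Real.cosh_pos _
  rw [neg_mul, Real.cosh_eq, Real.cosh_eq, Real.exp_neg]
  field_simp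
  ring

lemma sinh_pow_four (x : ℝ) :
    Real.sinh x ^ 4 = (Real.cosh (4*x) - 4 * Real.cosh (2*x) + 3) / 8 := by
  have h1 : Real.cosh (2*x) = 2 * Real.sinh x ^ 2 + 1 := by
    rw [Real.cosh_two_mul, Real.cosh_sq]; ring
  have h2 : Real.cosh (4*x) = 2 * Real.cosh (2*x) ^ 2 - 1 := by
    rw [show (4:ℝ)*x = 2*(2*x) by ring, Real.cosh_two_mul, Real.sinh_sq]; ring
  rw [h2, h1]; ring

theorem stmt_7 (c : ℝ) (hc : 0 < c) (hc' : c < π / 8) :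
    ∫ z in Set.Ioi (0 : ℝ), (Real.sinh (c * z)) ^ 4 / Real.cosh (π * z / 2) =
      (1 / 8) * (1 / Real.cos (4 * c) - 4 / Real.cos (2 * c) + 3) := by
  have hπ := Real.pi_pos
  have h4 : |4*c| < π/2 := by rw [abs_of_pos (by linarith)]; linarith
  have h2 : |2*c| < π/2 := by rw [abs_of_pos (by linarith)]; linarith
  have h0 : |(0:ℝ)| < π/2 := by rw [abs_zero]; linarith
  have i4 := int_cosh_ratio h4
  have i2 := int_cosh_ratio h2
  have i0 := int_cosh_ratio h0
  have I4 := cosh_ratio_integral h4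
  have I2 := cosh_ratio_integral h2
  have I0 := cosh_ratio_integral h0
  simp only [zero_mul, Real.cosh_zero, Real.cos_zero] at i0 I0
  have hEq : EqOn (fun z => Real.sinh (c*z) ^ 4 / Real.cosh (π*z/2))
      (fun z => (1/8) * (Real.cosh (4*c*z) / Real.cosh (π*z/2))
        - (1/2) * (Real.cosh (2*c*z) / Real.cosh (π*z/2))
        + (3/8) * (1 / Real.cosh (π*z/2))) (Ioi (0:ℝ)) := by
    intro z _
    simp only
    rw [sinh_pow_four, show 4*(c*z) = 4*c*z by ring, show 2*(c*z) = 2*c*z by ring]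
    ring
  have iA : IntegrableOn (fun z => (1/8) * (Real.cosh (4*c*z) / Real.cosh (π*z/2))
      - (1/2) * (Real.cosh (2*c*z) / Real.cosh (π*z/2))) (Ioi (0:ℝ)) :=
    (i4.const_mul _).sub (i2.const_mul _)
  have iB : IntegrableOn (fun z => (3/8) * (1 / Real.cosh (π*z/2))) (Ioi (0:ℝ)) :=
    i0.const_mul _
  have iC : IntegrableOn (fun z => (1/8) * (Real.cosh (4*c*z) / Real.cosh (π*z/2))) (Ioi (0:ℝ)) :=
    i4.const_mul _
  have iD : IntegrableOn (fun z => (1/2) * (Real.cosh (2*c*z) / Real.cosh (π*z/2))) (Ioi (0:ℝ)) :=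
    i2.const_mul _
  rw [setIntegral_congr_fun measurableSet_Ioi hEq,
    integral_add iA iB, integral_sub iC iD,
    MeasureTheory.integral_const_mul, MeasureTheory.integral_const_mul, MeasureTheory.integral_const_mul, I4, I2, I0]
  ring
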